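/- Variance reduction of the f-HNCA component estimator, unmediated case (Appendix G): in the model with no connections mediated through children, for any function component f : S → B → V → ℝ, the variance under the joint pmf q' of the estimator (b, φ, v) ↦ ∑_{φ'} g φ' b * f φ' b v is at most the variance under q' of the REINFORCE estimator (b, φ, v) ↦ ((g φ b) / (π θ φ b)) * f φ b v, where q'(b,φ,v) = μ b * π θ φ b * ν' v b and Var_{q'}(X) = ∑ q' * X^2 − (∑ q' * X)^2. -/

import Mathlib

/-- Variance reduction of the f-HNCA component estimator, unmediated case (Appendix G):
the estimator ∑_{φ'} (∂π(φ'|pa)/∂θ) f^i_Φ(φ') has variance at most that of the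
REINFORCE component estimator under the joint distribution q'. -/
theorem fhnca_unmediated_variance_le_reinforce
    {B S V : Type*} [Fintype B] [Fintype S] [Fintype V]
    [Nonempty B] [Nonempty S] [Nonempty V]
    (μ : B → ℝ) (π : ℝ → S → B → ℝ) (ν' : V → B → ℝ) (θ : ℝ)
    (hμ0 : ∀ b, 0 ≤ μ b) (hμ1 : ∑ b, μ b = 1)
    (hπ0 : ∀ t φ b, 0 ≤ π t φ b) (hπ1 : ∀ t b, ∑ φ, π t φ b = 1)
    (hπpos : ∀ φ b, 0 < π θ φ b)
    (hν0 : ∀ v b, 0 ≤ ν' v b) (hν1 : ∀ b, ∑ v, ν' v b = 1)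
    (g : S → B → ℝ) (hg : ∀ φ b, HasDerivAt (fun t => π t φ b) (g φ b) θ)
    (f : S → B → V → ℝ) :
    (∑ b, ∑ φ, ∑ v,
        (μ b * π θ φ b * ν' v b) * (∑ φ', g φ' b * f φ' b v) ^ 2) -
      (∑ b, ∑ φ, ∑ v,
        (μ b * π θ φ b * ν' v b) * (∑ φ', g φ' b * f φ' b v)) ^ 2 ≤
    (∑ b, ∑ φ, ∑ v,
        (μ b * π θ φ b * ν' v b) * ((g φ b / π θ φ b) * f φ b v) ^ 2) -
      (∑ b, ∑ φ, ∑ v,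
        (μ b * π θ φ b * ν' v b) * ((g φ b / π θ φ b) * f φ b v)) ^ 2 := by
  -- Pointwise Cauchy–Schwarz bound
  have key : ∀ b v, (∑ φ', g φ' b * f φ' b v) ^ 2 ≤
      ∑ φ, (g φ b * f φ b v) ^ 2 / π θ φ b := by
    intro b v
    have hcs := Finset.sum_mul_sq_le_sq_mul_sq Finset.univ
      (fun φ => Real.sqrt (π θ φ b))
      (fun φ => g φ b * f φ b v / Real.sqrt (π θ φ b))
    have hsqrt : ∀ φ : S, Real.sqrt (π θ φ b) ≠ 0 := fun φ =>
      (Real.sqrt_pos.mpr (hπpos φ b)).ne'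
    have h1 : (∑ φ, Real.sqrt (π θ φ b) * (g φ b * f φ b v / Real.sqrt (π θ φ b)))
        = ∑ φ', g φ' b * f φ' b v := by
      refine Finset.sum_congr rfl fun φ _ => ?_
      field_simp
      rw [mul_assoc]; exact mul_div_cancel_left₀ _ (hsqrt φ)
    have h2 : (∑ φ, Real.sqrt (π θ φ b) ^ 2) = 1 := by
      simp only [Real.sq_sqrt (hπ0 θ _ b)]
      exact hπ1 θ b
    have h3 : (∑ φ, (g φ b * f φ b v / Real.sqrt (π θ φ b)) ^ 2)
        = ∑ φ, (g φ b * f φ b v) ^ 2 / π θ φ b := by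
      refine Finset.sum_congr rfl fun φ _ => ?_
      rw [div_pow, Real.sq_sqrt (hπ0 θ _ b)]
    rw [h1, h2, h3, one_mul] at hcs
    exact hcs
  -- Means coincide
  have hmean : (∑ b, ∑ φ, ∑ v,
        (μ b * π θ φ b * ν' v b) * (∑ φ', g φ' b * f φ' b v))
      = ∑ b, ∑ φ, ∑ v,
        (μ b * π θ φ b * ν' v b) * ((g φ b / π θ φ b) * f φ b v) := by
    refine Finset.sum_congr rfl fun b _ => ?_
    rw [Finset.sum_comm]
    conv_rhs => rw [Finset.sum_comm]
    refine Finset.sum_congr rfl fun v _ => ?_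
    have hl : (∑ φ, (μ b * π θ φ b * ν' v b) * (∑ φ', g φ' b * f φ' b v))
        = μ b * ν' v b * (∑ φ', g φ' b * f φ' b v) := by
      rw [← Finset.sum_mul]
      have : (∑ φ, μ b * π θ φ b * ν' v b) = μ b * ν' v b := by
        rw [← Finset.sum_mul]
        rw [show (∑ φ, μ b * π θ φ b) = μ b * ∑ φ, π θ φ b from
          (Finset.mul_sum _ _ _).symm]
        rw [hπ1 θ b]; ring
      rw [this]
    rw [hl]
    have hr : ∀ φ, (μ b * π θ φ b * ν' v b) * ((g φ b / π θ φ b) * f φ b v)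
        = μ b * ν' v b * (g φ b * f φ b v) := by
      intro φ
      field_simp [(hπpos φ b).ne']
    rw [Finset.sum_congr rfl fun φ _ => hr φ, ← Finset.mul_sum]
  -- Second moments inequality
  have hsecond : (∑ b, ∑ φ, ∑ v,
        (μ b * π θ φ b * ν' v b) * (∑ φ', g φ' b * f φ' b v) ^ 2)
      ≤ ∑ b, ∑ φ, ∑ v,
        (μ b * π θ φ b * ν' v b) * ((g φ b / π θ φ b) * f φ b v) ^ 2 := by
    refine Finset.sum_le_sum fun b _ => ?_
    rw [Finset.sum_comm]
    conv_rhs => rw [Finset.sum_comm]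
    refine Finset.sum_le_sum fun v _ => ?_
    have hl : (∑ φ, (μ b * π θ φ b * ν' v b) * (∑ φ', g φ' b * f φ' b v) ^ 2)
        = μ b * ν' v b * (∑ φ', g φ' b * f φ' b v) ^ 2 := by
      rw [← Finset.sum_mul]
      congr 1
      rw [← Finset.sum_mul]
      rw [show (∑ φ, μ b * π θ φ b) = μ b * ∑ φ, π θ φ b from
        (Finset.mul_sum _ _ _).symm]
      rw [hπ1 θ b]; ring
    have hr : (∑ φ, (μ b * π θ φ b * ν' v b) * ((g φ b / π θ φ b) * f φ b v) ^ 2)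
        = μ b * ν' v b * ∑ φ, (g φ b * f φ b v) ^ 2 / π θ φ b := by
      rw [Finset.mul_sum]
      refine Finset.sum_congr rfl fun φ _ => ?_
      field_simp [(hπpos φ b).ne']
    rw [hl, hr]
    exact mul_le_mul_of_nonneg_left (key b v)
      (mul_nonneg (hμ0 b) (hν0 v b))
  rw [hmean] at *
  linarith
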